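/- Let α > γ > 0, σ ≥ μ > 0, β > σ/γ and λ > 1. Then δ₁(β, λ) < 0, where δ₁(β, λ) = (1/(2λ))·(−μλ + βα b_β − σλ + βγ a_β − √((μλ − βα b_β + σλ − βγ a_β)² − 4(μσλ² − βα b_β σλ − βγ a_β μλ))). -/

import Mathlib

/-- The positive constant solution component `a_β`. -/
noncomputable def aβ (μ σ α γ β : ℝ) : ℝ := (β * α - μ) * σ / (β ^ 2 * α * γ - μ * σ)

/-- The positive constant solution component `b_β`. -/
noncomputable def bβ (μ σ α γ β : ℝ) : ℝ := (β * γ - σ) * μ / (β ^ 2 * α * γ - μ * σ)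

/-- The smaller eigenvalue `δ₁(β, λ)` of the matrix `D(β, λ)` (times λ). -/
noncomputable def delta₁ (μ σ α γ β lam : ℝ) : ℝ :=
  (1 / (2 * lam)) * (-(μ * lam) + β * α * bβ μ σ α γ β - σ * lam + β * γ * aβ μ σ α γ β -
    Real.sqrt ((μ * lam - β * α * bβ μ σ α γ β + σ * lam - β * γ * aβ μ σ α γ β) ^ 2 -
      4 * (μ * σ * lam ^ 2 - β * α * bβ μ σ α γ β * σ * lam -
        β * γ * aβ μ σ α γ β * μ * lam)))

/-- The larger eigenvalue `δ₂(β, λ)` of the matrix `D(β, λ)` (times λ). -/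
noncomputable def delta₂ (μ σ α γ β lam : ℝ) : ℝ :=
  (1 / (2 * lam)) * (-(μ * lam) + β * α * bβ μ σ α γ β - σ * lam + β * γ * aβ μ σ α γ β +
    Real.sqrt ((μ * lam - β * α * bβ μ σ α γ β + σ * lam - β * γ * aβ μ σ α γ β) ^ 2 -
      4 * (μ * σ * lam ^ 2 - β * α * bβ μ σ α γ β * σ * lam -
        β * γ * aβ μ σ α γ β * μ * lam)))

/-- For α > γ > 0, σ ≥ μ > 0, β > σ/γ and λ > 1, one has δ₁(β, λ) < 0. -/
theorem delta1_two_var_neg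
    (μ σ α γ β lam : ℝ) (hαγ : γ < α) (hγ : 0 < γ) (hμσ : μ ≤ σ) (hμ : 0 < μ)
    (hβ : σ / γ < β) (hlam : 1 < lam) :
    delta₁ μ σ α γ β lam < 0 := by
  have hσ : 0 < σ := lt_of_lt_of_le hμ hμσ
  have hβ0 : 0 < β := lt_trans (div_pos hσ hγ) hβ
  have hβγ : σ < β * γ := (div_lt_iff₀ hγ).mp hβ
  have hβα : μ < β * α := by nlinarith
  have hD : 0 < β ^ 2 * α * γ - μ * σ := by nlinarith
  have hlam0 : 0 < lam := by linarith
  unfold delta₁ aβ bβ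
  have hsum : β * α * ((β * γ - σ) * μ / (β ^ 2 * α * γ - μ * σ)) +
      β * γ * ((β * α - μ) * σ / (β ^ 2 * α * γ - μ * σ)) < (μ + σ) * lam := by
    rw [mul_div_assoc', mul_div_assoc', ← add_div, div_lt_iff₀ hD]
    nlinarith [mul_pos hμ hσ, mul_pos hD (show (0:ℝ) < lam - 1 by linarith),
      mul_nonneg (mul_pos hμ hσ).le (show (0:ℝ) ≤ β * (α + γ) - (μ + σ) by nlinarith)]
  apply mul_neg_of_pos_of_neg
  · positivity
  · have hs := Real.sqrt_nonneg ((μ * lam - β * α * ((β * γ - σ) * μ / (β ^ 2 * α * γ - μ * σ)) + σ * lam - β * γ * ((β * α - μ) * σ / (β ^ 2 * α * γ - μ * σ))) ^ 2 -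
      4 * (μ * σ * lam ^ 2 - β * α * ((β * γ - σ) * μ / (β ^ 2 * α * γ - μ * σ)) * σ * lam -
        β * γ * ((β * α - μ) * σ / (β ^ 2 * α * γ - μ * σ)) * μ * lam))
    nlinarith [hsum, hs]
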